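/- Assume A = ln(S/K) + rT > 0 and set k = √(2A). Then E[Φ(d₁)] = 1/2 + (1/√(2π)) ( ∫₀^k e^{-s²/2} ds + ∫_k^∞ ( Q(σ̄₀ < σ₁(s)) + Q(σ̄₀ > σ₂(s)) ) e^{-s²/2} ds ) − (1/√(2π)) ∫_{-∞}^{-k} ( Q(σ̄₀ < σ₂(s)) − Q(σ̄₀ < σ₁(s)) ) e^{-s²/2} ds. -/

import Mathlib

open MeasureTheory Real Set

noncomputable def stdNormalCDF (x : ℝ) : ℝ :=
  (Real.sqrt (2 * Real.pi))⁻¹ * ∫ u in Set.Iio x, Real.exp (-u ^ 2 / 2)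

set_option maxHeartbeats 2000000 in
theorem expectation_Phi_d1_pos
    {Ω : Type*} [MeasurableSpace Ω] (Q : Measure Ω) [IsProbabilityMeasure Q]
    (c : ℝ) (hc : 0 < c) (σ₀ : Ω → ℝ) (hσ₀ : Measurable σ₀)
    (hσ₀c : ∀ᵐ ω ∂Q, c ≤ σ₀ ω)
    (S K T r : ℝ) (hS : 0 < S) (hK : 0 < K) (hT : 0 < T)
    (A : ℝ) (hA : A = Real.log (S / K) + r * T) (hApos : 0 < A)
    (k : ℝ) (hk : k = Real.sqrt (2 * A))
    (d₁ : Ω → ℝ)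
    (hd₁ : d₁ = fun ω =>
      (Real.log (S / K) + (r + σ₀ ω ^ 2 / 2) * T) / (σ₀ ω * Real.sqrt T))
    (σ₁ σ₂ : ℝ → ℝ)
    (hσ₁ : ∀ s, σ₁ s = s / Real.sqrt T - Real.sqrt (s ^ 2 * T - 2 * T * A) / T)
    (hσ₂ : ∀ s, σ₂ s = s / Real.sqrt T + Real.sqrt (s ^ 2 * T - 2 * T * A) / T) :
    ∫ ω, stdNormalCDF (d₁ ω) ∂Q
      = 1 / 2
        + (Real.sqrt (2 * Real.pi))⁻¹
            * ((∫ s in (0 : ℝ)..k, Real.exp (-s ^ 2 / 2))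
              + ∫ s in Set.Ioi k,
                  ((Q {ω | σ₀ ω < σ₁ s}).toReal + (Q {ω | σ₀ ω > σ₂ s}).toReal)
                    * Real.exp (-s ^ 2 / 2))
        - (Real.sqrt (2 * Real.pi))⁻¹
            * ∫ s in Set.Iio (-k),
                ((Q {ω | σ₀ ω < σ₂ s}).toReal - (Q {ω | σ₀ ω < σ₁ s}).toReal)
                  * Real.exp (-s ^ 2 / 2) := by
  have hπ : (0:ℝ) < Real.sqrt (2 * Real.pi) :=
    Real.sqrt_pos.mpr (by positivity)
  have hu : (0:ℝ) < Real.sqrt T := Real.sqrt_pos.mpr hT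
  have hu2 : Real.sqrt T ^ 2 = T := Real.sq_sqrt hT.le
  have hk0 : 0 ≤ k := hk ▸ Real.sqrt_nonneg _
  have hk2 : k ^ 2 = 2 * A := by rw [hk, Real.sq_sqrt]; linarith
  set u := Real.sqrt T with hudef
  set g : ℝ → ℝ := fun s => Real.exp (-s ^ 2 / 2) with hgdef
  have hgint : Integrable g := by
    refine (integrable_exp_neg_mul_sq (b := (1/2 : ℝ)) (by norm_num)).congr ?_
    filter_upwards with x
    rw [hgdef]; ring_nf
  have hd₁' : ∀ ω, d₁ ω = (A + σ₀ ω ^ 2 / 2 * T) / (σ₀ ω * u) := by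
    intro ω; rw [hd₁, hA]; ring_nf
  have hmd : Measurable d₁ := by rw [hd₁]; fun_prop
  have hnull : Q {ω | σ₀ ω < c} = 0 := by
    have h := hσ₀c
    rw [ae_iff] at h
    simpa [not_le] using h
  -- quadratic reformulation of s < d₁ ω
  have hquad : ∀ s, ∀ ω, c ≤ σ₀ ω →
      (s < d₁ ω ↔ 0 < (σ₀ ω * u) ^ 2 / 2 - s * (σ₀ ω * u) + A) := by
    intro s ω hω
    have hx : 0 < σ₀ ω := lt_of_lt_of_le hc hω
    have hxu : 0 < σ₀ ω * u := by positivity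
    rw [hd₁' ω, lt_div_iff₀ hxu]
    constructor <;> intro h <;> nlinarith [hu2]
  -- roots expressed via D = √(s² - 2A), valid whenever s² ≥ 2A
  have hroots : ∀ s, 2 * A ≤ s ^ 2 →
      σ₁ s = (s - Real.sqrt (s ^ 2 - 2 * A)) / u ∧
      σ₂ s = (s + Real.sqrt (s ^ 2 - 2 * A)) / u := by
    intro s hs
    have hDrw : Real.sqrt (s ^ 2 * T - 2 * T * A)
        = u * Real.sqrt (s ^ 2 - 2 * A) := by
      rw [hudef, ← Real.sqrt_mul hT.le]
      congr 1; ring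
    have hT' : T = u ^ 2 := hu2.symm
    constructor
    · rw [hσ₁ s, hDrw, hT']; field_simp
    · rw [hσ₂ s, hDrw, hT']; field_simp
  -- measure of {s < d₁} for s < k
  have hQ1 : ∀ s, s < k → (Q {ω | s < d₁ ω}).toReal = 1 := by
    intro s hs
    have hone : Q {ω | s < d₁ ω} = 1 := by
      have hsub : {ω | s < d₁ ω}ᶜ ⊆ {ω | σ₀ ω < c} := by
        intro ω hω
        simp only [mem_compl_iff, mem_setOf_eq, not_lt] at hω ⊢
        by_contra hcon
        push_neg at hcon
        have := (hquad s ω hcon).mpr ?_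
        · exact absurd hω (not_le.mpr this)
        · have hx : 0 < σ₀ ω := lt_of_lt_of_le hc hcon
          have hxu : 0 < σ₀ ω * u := mul_pos hx hu
          rcases le_or_gt s 0 with h0 | h0
          · nlinarith
          · have : s ^ 2 < 2 * A := by nlinarith
            nlinarith [sq_nonneg (σ₀ ω * u - s)]
      have : Q {ω | s < d₁ ω}ᶜ = 0 := measure_mono_null hsub hnull
      rwa [prob_compl_eq_zero_iff (measurableSet_lt measurable_const hmd)] at this
    simp [hone]
  -- measure of {s < d₁} for s > k
  have hQ2 : ∀ s, k < s → (Q {ω | s < d₁ ω}).toReal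
      = (Q {ω | σ₀ ω < σ₁ s}).toReal + (Q {ω | σ₀ ω > σ₂ s}).toReal := by
    intro s hs
    have hs2 : 2 * A < s ^ 2 := by nlinarith
    obtain ⟨h1, h2⟩ := hroots s hs2.le
    set D := Real.sqrt (s ^ 2 - 2 * A) with hDdef
    have hD0 : 0 < D := Real.sqrt_pos.mpr (by linarith)
    have hD2 : D ^ 2 = s ^ 2 - 2 * A := Real.sq_sqrt (by linarith)
    have hσle : σ₁ s < σ₂ s := by
      rw [h1, h2, div_lt_div_iff₀ hu hu]
      nlinarith
    have hset : Q {ω | s < d₁ ω} = Q ({ω | σ₀ ω < σ₁ s} ∪ {ω | σ₂ s < σ₀ ω}) := by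
      apply measure_congr
      rw [Filter.eventuallyEq_set]
      filter_upwards [hσ₀c] with ω hω
      simp only [mem_setOf_eq, mem_union]
      rw [hquad s ω hω, h1, h2]
      have hx : 0 < σ₀ ω := lt_of_lt_of_le hc hω
      have key : (σ₀ ω * u) ^ 2 / 2 - s * (σ₀ ω * u) + A
          = (σ₀ ω * u - (s - D)) * (σ₀ ω * u - (s + D)) / 2 := by
        linear_combination hD2 / 2
      rw [key]
      constructor
      · intro h
        rcases mul_pos_iff.mp (by linarith :
            0 < (σ₀ ω * u - (s - D)) * (σ₀ ω * u - (s + D))) with ⟨ha, hb⟩ | ⟨ha, hb⟩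
        · right; rw [div_lt_iff₀ hu]; linarith
        · left; rw [lt_div_iff₀ hu]; linarith
      · intro h
        have hpos : 0 < (σ₀ ω * u - (s - D)) * (σ₀ ω * u - (s + D)) := by
          rcases h with h | h
          · rw [lt_div_iff₀ hu] at h
            apply mul_pos_of_neg_of_neg <;> linarith
          · rw [div_lt_iff₀ hu] at h
            apply mul_pos <;> linarith
        linarith
    have hdis : Disjoint {ω | σ₀ ω < σ₁ s} {ω | σ₂ s < σ₀ ω} := by
      rw [Set.disjoint_left]
      intro ω ha hb
      simp only [mem_setOf_eq] at ha hb
      linarith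
    have hms : MeasurableSet {ω | σ₂ s < σ₀ ω} := measurableSet_lt measurable_const hσ₀
    rw [hset, measure_union hdis hms,
      ENNReal.toReal_add (measure_ne_top _ _) (measure_ne_top _ _)]
  -- measures for s < -k
  have hQ3 : ∀ s, s < -k → Q {ω | σ₀ ω < σ₂ s} = 0 ∧ Q {ω | σ₀ ω < σ₁ s} = 0 := by
    intro s hs
    have hsneg : s < 0 := by linarith
    have hs2 : 2 * A ≤ s ^ 2 := by nlinarith
    obtain ⟨h1, h2⟩ := hroots s hs2
    set D := Real.sqrt (s ^ 2 - 2 * A) with hDdef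
    have hD0 : 0 ≤ D := Real.sqrt_nonneg _
    have hD2 : D ^ 2 = s ^ 2 - 2 * A := Real.sq_sqrt (by linarith)
    have hDlt : D < -s := by nlinarith
    have hσ₂c : σ₂ s < c := by
      rw [h2]
      exact lt_trans (div_neg_of_neg_of_pos (by linarith) hu) hc
    have hσ₁c : σ₁ s < c := by
      rw [h1]
      exact lt_trans (div_neg_of_neg_of_pos (by linarith) hu) hc
    constructor
    · exact measure_mono_null (fun ω hω => lt_trans hω hσ₂c) hnull
    · exact measure_mono_null (fun ω hω => lt_trans hω hσ₁c) hnull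
  -- Fubini
  have hswap : ∫ ω, (∫ s in Iio (d₁ ω), g s) ∂Q
      = ∫ s : ℝ, (Q {ω | s < d₁ ω}).toReal * g s := by
    set f : Ω → ℝ → ℝ := fun ω s => ({ω' | s < d₁ ω'}).indicator (fun _ => g s) ω
      with hfdef
    have hM : MeasurableSet {p : Ω × ℝ | p.2 < d₁ p.1} :=
      measurableSet_lt measurable_snd (hmd.comp measurable_fst)
    have hgsnd : Integrable (fun p : Ω × ℝ => g p.2) (Q.prod volume) := by
      have h1 : Measure.map Prod.snd (Q.prod volume) = (volume : Measure ℝ) := by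
        rw [Measure.map_snd_prod]; simp
      exact (integrable_map_measure (f := Prod.snd) (g := g)
        (by rw [h1]; exact hgint.1) measurable_snd.aemeasurable).mp
        (by rw [h1]; exact hgint)
    have huncurry : Function.uncurry f
        = Set.indicator {p : Ω × ℝ | p.2 < d₁ p.1} (fun p => g p.2) := by
      ext p
      simp only [Function.uncurry, hfdef, Set.indicator_apply, Set.mem_setOf_eq]
    have hintf : Integrable (Function.uncurry f) (Q.prod volume) := by
      rw [huncurry]; exact hgsnd.indicator hM
    have hs1 : ∀ ω, (∫ s, f ω s) = ∫ s in Iio (d₁ ω), g s := by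
      intro ω
      rw [← integral_indicator measurableSet_Iio]
      congr 1
    have hs2 : ∀ s : ℝ, (∫ ω, f ω s ∂Q) = (Q {ω | s < d₁ ω}).toReal * g s := by
      intro s
      rw [hfdef]
      rw [integral_indicator_const (g s) (measurableSet_lt measurable_const hmd)]
      simp [mul_comm]
      left; rfl
    calc ∫ ω, (∫ s in Iio (d₁ ω), g s) ∂Q
        = ∫ ω, (∫ s, f ω s) ∂Q := by simp_rw [hs1]
      _ = ∫ s : ℝ, (∫ ω, f ω s ∂Q) := integral_integral_swap hintf
      _ = ∫ s : ℝ, (Q {ω | s < d₁ ω}).toReal * g s := by simp_rw [hs2]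
  -- integrability of the marginal
  have hant : Antitone (fun s : ℝ => (Q {ω | s < d₁ ω}).toReal) := by
    intro s t hst
    exact ENNReal.toReal_mono (measure_ne_top _ _)
      (measure_mono (fun ω hω => lt_of_le_of_lt hst hω))
  have hFmeas : Measurable (fun s : ℝ => (Q {ω | s < d₁ ω}).toReal * g s) := by
    apply hant.measurable.mul
    fun_prop
  have hFint : Integrable (fun s : ℝ => (Q {ω | s < d₁ ω}).toReal * g s) := by
    refine hgint.mono' hFmeas.aestronglyMeasurable ?_
    filter_upwards with s
    rw [Real.norm_eq_abs, abs_mul, abs_of_nonneg ENNReal.toReal_nonneg,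
      abs_of_nonneg (Real.exp_pos _).le]
    have h1 : (Q {ω | s < d₁ ω}).toReal ≤ 1 := by
      simpa using ENNReal.toReal_mono (by simp) (prob_le_one (μ := Q) (s := {ω | s < d₁ ω}))
    calc (Q {ω | s < d₁ ω}).toReal * g s ≤ 1 * g s :=
          mul_le_mul_of_nonneg_right h1 (Real.exp_pos _).le
      _ = g s := one_mul _
  -- final assembly
  have hLHS : ∫ ω, stdNormalCDF (d₁ ω) ∂Q
      = (Real.sqrt (2 * Real.pi))⁻¹ * ∫ s : ℝ, (Q {ω | s < d₁ ω}).toReal * g s := by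
    unfold stdNormalCDF
    rw [integral_const_mul, hswap]
  have hsplit : ∫ s : ℝ, (Q {ω | s < d₁ ω}).toReal * g s
      = (∫ s in Iic k, (Q {ω | s < d₁ ω}).toReal * g s)
        + ∫ s in Ioi k, (Q {ω | s < d₁ ω}).toReal * g s :=
    (intervalIntegral.integral_Iic_add_Ioi hFint.integrableOn hFint.integrableOn).symm
  have hIic : ∫ s in Iic k, (Q {ω | s < d₁ ω}).toReal * g s = ∫ s in Iic k, g s := by
    rw [← setIntegral_congr_set Iio_ae_eq_Iic,
      ← setIntegral_congr_set (Iio_ae_eq_Iic (a := k)) (f := g)]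
    apply setIntegral_congr_fun measurableSet_Iio
    intro s hs
    show (Q {ω | s < d₁ ω}).toReal * g s = g s
    rw [hQ1 s hs, one_mul]
  have hIic2 : ∫ s in Iic k, g s = (∫ s in Iic (0:ℝ), g s) + ∫ s in (0:ℝ)..k, g s := by
    rw [intervalIntegral.integral_of_le hk0,
      ← setIntegral_union (Iic_disjoint_Ioc le_rfl) measurableSet_Ioc
        hgint.integrableOn hgint.integrableOn, Iic_union_Ioc_eq_Iic hk0]
  have hIoi : ∫ s in Ioi k, (Q {ω | s < d₁ ω}).toReal * g s
      = ∫ s in Ioi k,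
          ((Q {ω | σ₀ ω < σ₁ s}).toReal + (Q {ω | σ₀ ω > σ₂ s}).toReal) * g s := by
    apply setIntegral_congr_fun measurableSet_Ioi
    intro s hs
    show (Q {ω | s < d₁ ω}).toReal * g s
      = ((Q {ω | σ₀ ω < σ₁ s}).toReal + (Q {ω | σ₀ ω > σ₂ s}).toReal) * g s
    rw [hQ2 s hs]
  have hzero : ∫ s in Iio (-k),
      ((Q {ω | σ₀ ω < σ₂ s}).toReal - (Q {ω | σ₀ ω < σ₁ s}).toReal) * g s = 0 := by
    have heq : EqOn (fun s => ((Q {ω | σ₀ ω < σ₂ s}).toReal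
        - (Q {ω | σ₀ ω < σ₁ s}).toReal) * g s) (fun _ => (0:ℝ)) (Iio (-k)) := by
      intro s hs
      obtain ⟨hz2, hz1⟩ := hQ3 s hs
      simp [hz1, hz2]
    rw [setIntegral_congr_fun measurableSet_Iio heq, integral_zero]
  have hhalf : (Real.sqrt (2 * Real.pi))⁻¹ * ∫ s in Iic (0:ℝ), g s = 1/2 := by
    have heven : ∫ s in Iic (0:ℝ), g s = ∫ s in Ioi (0:ℝ), g s := by
      calc ∫ s in Iic (0:ℝ), g s = ∫ s in Iic (0:ℝ), g (-s) := by
            apply setIntegral_congr_fun measurableSet_Iic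
            intro s _
            simp [hgdef]
        _ = ∫ s in Ioi (-(0:ℝ)), g s := integral_comp_neg_Iic 0 g
        _ = ∫ s in Ioi (0:ℝ), g s := by norm_num
    have htot : (∫ s in Iic (0:ℝ), g s) + ∫ s in Ioi (0:ℝ), g s = ∫ s : ℝ, g s :=
      intervalIntegral.integral_Iic_add_Ioi hgint.integrableOn hgint.integrableOn
    have hgauss : ∫ s : ℝ, g s = Real.sqrt (2 * Real.pi) := by
      have h := integral_gaussian (1/2 : ℝ)
      rw [show Real.pi / (1/2 : ℝ) = 2 * Real.pi by ring] at h
      rw [← h]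
      congr 1
      funext x
      rw [hgdef]
      ring_nf
    have hval : ∫ s in Iic (0:ℝ), g s = Real.sqrt (2 * Real.pi) / 2 := by
      rw [hgauss] at htot; linarith
    rw [hval]
    field_simp
  have hgs : ∀ s : ℝ, Real.exp (-s ^ 2 / 2) = g s := fun s => rfl
  simp_rw [hgs]
  rw [hLHS, hsplit, hIic, hIic2, hIoi, hzero]
  linear_combination hhalf
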